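/- Let {A^x_a} and {B^x_a} be measurements and {C^x_a} a submeasurement, all indexed by x ∼ μ with outcomes in a finite set. Suppose E_x Σ_{a≠b} τ(A^x_a C^x_b) ≤ δ and E_x Σ_a ‖A^x_a − B^x_a‖_τ² ≤ ε². Then E_x Σ_{a≠b} τ(B^x_a C^x_b) ≤ δ + ε. -/

import Mathlib

open scoped Matrix ComplexOrder BigOperators

/-- The normalized trace (the unique tracial state on n×n complex matrices). -/
noncomputable def tau {n : ℕ} (A : Matrix (Fin n) (Fin n) ℂ) : ℂ := A.trace / (n : ℂ)

/-- The squared τ-norm, `‖A‖_τ² = τ(A*A)` (a real number). -/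
noncomputable def tauNormSq {n : ℕ} (A : Matrix (Fin n) (Fin n) ℂ) : ℝ := (tau (Aᴴ * A)).re

/-- A submeasurement: a family of positive semidefinite operators with sum at most the identity. -/
def IsSubmeasurement {n : ℕ} {α : Type*} [Fintype α]
    (M : α → Matrix (Fin n) (Fin n) ℂ) : Prop :=
  (∀ a, (M a).PosSemidef) ∧ (1 - ∑ a, M a).PosSemidef

/-- A measurement: a family of positive semidefinite operators summing to the identity. -/
def IsMeasurement {n : ℕ} {α : Type*} [Fintype α]
    (M : α → Matrix (Fin n) (Fin n) ℂ) : Prop :=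
  (∀ a, (M a).PosSemidef) ∧ (∑ a, M a) = 1

/-- A projective submeasurement: a family of orthogonal projections with sum at most the identity. -/
def IsProjectiveSubmeasurement {n : ℕ} {α : Type*} [Fintype α]
    (M : α → Matrix (Fin n) (Fin n) ℂ) : Prop :=
  (∀ a, (M a).IsHermitian ∧ M a * M a = M a) ∧ (1 - ∑ a, M a).PosSemidef

namespace TCAux
variable {n : ℕ}

lemma diag_nonneg {M : Matrix (Fin n) (Fin n) ℂ} (h : M.PosSemidef) (i : Fin n) : 0 ≤ M i i := by
  exact h.diag_nonneg

lemma trace_nonneg_of_psd {M : Matrix (Fin n) (Fin n) ℂ} (h : M.PosSemidef) : 0 ≤ M.trace :=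
  Finset.sum_nonneg fun i _ => diag_nonneg h i

lemma trace_mul_nonneg {P Q : Matrix (Fin n) (Fin n) ℂ} (hP : P.PosSemidef) (hQ : Q.PosSemidef) :
    0 ≤ (P * Q).trace := by
  have hPR : ∃ R : Matrix (Fin n) (Fin n) ℂ, P = Rᴴ * R := by
    open scoped MatrixOrder in
    obtain ⟨R, hR⟩ := CStarAlgebra.nonneg_iff_eq_star_mul_self.mp hP.nonneg
    exact ⟨R, hR⟩
  obtain ⟨R, rfl⟩ := hPR
  have h1 : (Rᴴ * R * Q).trace = (R * Q * Rᴴ).trace := by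
    rw [Matrix.mul_assoc, Matrix.trace_mul_comm]
  rw [h1]
  exact trace_nonneg_of_psd (hQ.mul_mul_conjTranspose_same R)

lemma tau_re (M : Matrix (Fin n) (Fin n) ℂ) : (tau M).re = M.trace.re / n := by
  have h : tau M = (((n : ℝ)⁻¹ : ℝ) : ℂ) * M.trace := by
    rw [tau, div_eq_inv_mul]; push_cast; ring
  rw [h, Complex.re_ofReal_mul, inv_mul_eq_div]

lemma tau_sum {ι : Type*} (s : Finset ι) (f : ι → Matrix (Fin n) (Fin n) ℂ) :
    tau (∑ i ∈ s, f i) = ∑ i ∈ s, tau (f i) := by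
  simp [tau, Matrix.trace_sum, Finset.sum_div]

lemma tau_sub (M N : Matrix (Fin n) (Fin n) ℂ) : tau (M - N) = tau M - tau N := by
  simp [tau, Matrix.trace_sub, sub_div]


lemma sum_cs {ι : Type*} [Fintype ι] (f g : ι → ℝ) (hf : ∀ i, 0 ≤ f i) (hg : ∀ i, 0 ≤ g i) :
    ∑ i, f i * g i ≤ Real.sqrt (∑ i, f i ^ 2) * Real.sqrt (∑ i, g i ^ 2) := by
  have h := Finset.sum_mul_sq_le_sq_mul_sq Finset.univ f g
  have h0 : (0:ℝ) ≤ ∑ i, f i * g i := Finset.sum_nonneg fun i _ => mul_nonneg (hf i) (hg i)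
  have h1 : (0:ℝ) ≤ ∑ i, f i ^ 2 := Finset.sum_nonneg fun i _ => sq_nonneg _
  calc ∑ i, f i * g i = Real.sqrt ((∑ i, f i * g i) ^ 2) := (Real.sqrt_sq h0).symm
    _ ≤ Real.sqrt ((∑ i, f i ^ 2) * ∑ i, g i ^ 2) := Real.sqrt_le_sqrt h
    _ = Real.sqrt (∑ i, f i ^ 2) * Real.sqrt (∑ i, g i ^ 2) := Real.sqrt_mul h1 _

lemma trace_cs {n : ℕ} (M N : Matrix (Fin n) (Fin n) ℂ) :
    ((Mᴴ * N).trace).re ≤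
      Real.sqrt ((Mᴴ * M).trace).re * Real.sqrt ((Nᴴ * N).trace).re := by
  have key : ∀ (P Q : Matrix (Fin n) (Fin n) ℂ),
      ((Pᴴ * Q).trace).re = ∑ p : Fin n × Fin n, ((starRingEnd ℂ) (P p.2 p.1) * Q p.2 p.1).re := by
    intro P Q
    rw [Matrix.trace]
    simp only [Matrix.diag_apply, Matrix.mul_apply, Matrix.conjTranspose_apply,
      Complex.re_sum, Fintype.sum_prod_type]
    rfl
  have eM : ((Mᴴ * M).trace).re = ∑ p : Fin n × Fin n, ‖M p.2 p.1‖ ^ 2 := by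
    rw [key]
    refine Finset.sum_congr rfl fun p _ => ?_
    rw [Complex.sq_norm, ← Complex.normSq_eq_conj_mul_self]
    simp
  have eN : ((Nᴴ * N).trace).re = ∑ p : Fin n × Fin n, ‖N p.2 p.1‖ ^ 2 := by
    rw [key]
    refine Finset.sum_congr rfl fun p _ => ?_
    rw [Complex.sq_norm, ← Complex.normSq_eq_conj_mul_self]
    simp
  rw [key, eM, eN]
  calc ∑ p : Fin n × Fin n, ((starRingEnd ℂ) (M p.2 p.1) * N p.2 p.1).re
      ≤ ∑ p : Fin n × Fin n, ‖M p.2 p.1‖ * ‖N p.2 p.1‖ := by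
        refine Finset.sum_le_sum fun p _ => ?_
        calc ((starRingEnd ℂ) (M p.2 p.1) * N p.2 p.1).re
            ≤ ‖(starRingEnd ℂ) (M p.2 p.1) * N p.2 p.1‖ := Complex.re_le_norm _
          _ = ‖M p.2 p.1‖ * ‖N p.2 p.1‖ := by
              rw [norm_mul, Complex.norm_conj]
    _ ≤ _ := sum_cs _ _ (fun p => norm_nonneg _) (fun p => norm_nonneg _)

variable {n : ℕ}


lemma trace_re_nonneg_of_psd {M : Matrix (Fin n) (Fin n) ℂ} (h : M.PosSemidef) : 0 ≤ M.trace.re :=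
  (Complex.le_def.mp (trace_nonneg_of_psd h)).1

lemma tau_re_nonneg_of_psd {M : Matrix (Fin n) (Fin n) ℂ} (h : M.PosSemidef) : 0 ≤ (tau M).re := by
  rw [tau_re]; exact div_nonneg (trace_re_nonneg_of_psd h) (Nat.cast_nonneg n)

lemma tauNormSq_nonneg (M : Matrix (Fin n) (Fin n) ℂ) : 0 ≤ tauNormSq M :=
  tau_re_nonneg_of_psd (Matrix.posSemidef_conjTranspose_mul_self M)

lemma tau_cs (M N : Matrix (Fin n) (Fin n) ℂ) :
    (tau (Mᴴ * N)).re ≤ Real.sqrt (tau (Mᴴ * M)).re * Real.sqrt (tau (Nᴴ * N)).re := by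
  have hM : (0:ℝ) ≤ ((Mᴴ * M).trace).re :=
    trace_re_nonneg_of_psd (Matrix.posSemidef_conjTranspose_mul_self M)
  have hN : (0:ℝ) ≤ ((Nᴴ * N).trace).re :=
    trace_re_nonneg_of_psd (Matrix.posSemidef_conjTranspose_mul_self N)
  rcases Nat.eq_zero_or_pos n with hn | hn
  · subst hn
    simp [tau_re]
  · have hn' : (0:ℝ) < n := by exact_mod_cast hn
    rw [tau_re, tau_re, tau_re, Real.sqrt_div hM, Real.sqrt_div hN]
    have hss : Real.sqrt (n:ℝ) * Real.sqrt (n:ℝ) = (n:ℝ) := Real.mul_self_sqrt (le_of_lt hn')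
    have : Real.sqrt ((Mᴴ * M).trace).re / Real.sqrt n *
        (Real.sqrt ((Nᴴ * N).trace).re / Real.sqrt n)
        = Real.sqrt ((Mᴴ * M).trace).re * Real.sqrt ((Nᴴ * N).trace).re / n := by
      field_simp
      rw [Real.sq_sqrt hn'.le]; ring
    rw [this]
    exact div_le_div_of_nonneg_right (trace_cs M N) hn'.le

lemma psd_sum {ι : Type*} (s : Finset ι) (f : ι → Matrix (Fin n) (Fin n) ℂ)
    (h : ∀ i ∈ s, (f i).PosSemidef) : (∑ i ∈ s, f i).PosSemidef :=
  Finset.sum_induction f _ (fun _ _ ha hb => ha.add hb) Matrix.PosSemidef.zero h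

lemma sum_tau_sq_le_one {α : Type*} [Fintype α] [DecidableEq α]
    {C : α → Matrix (Fin n) (Fin n) ℂ} (hC : IsSubmeasurement C) :
    ∑ a, (tau (C a * C a)).re ≤ 1 := by
  set S : Matrix (Fin n) (Fin n) ℂ := ∑ a, C a with hS
  have hSpsd : S.PosSemidef := psd_sum _ _ fun a _ => hC.1 a
  -- step 1 : per-a trace bound
  have h1 : ∀ a, ((C a * C a).trace).re ≤ ((C a * S).trace).re := by
    intro a
    have hrest : (S - C a).PosSemidef := by
      have : S - C a = ∑ b ∈ Finset.univ.erase a, C b := by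
        rw [hS, ← Finset.sum_erase_add _ _ (Finset.mem_univ a)]; exact add_sub_cancel_right _ _
      rw [this]
      exact psd_sum _ _ fun b _ => hC.1 b
    have := (Complex.le_def.mp (trace_mul_nonneg (hC.1 a) hrest)).1
    have he : (C a * (S - C a)).trace = (C a * S).trace - (C a * C a).trace := by
      rw [mul_sub, Matrix.trace_sub]
    rw [he] at this
    simp only [Complex.sub_re, Complex.zero_re] at this
    linarith
  -- step 2 : sum equals trace (S*S)
  have h2 : ∑ a, ((C a * S).trace).re = ((S * S).trace).re := by
    rw [← Complex.re_sum, ← Matrix.trace_sum, ← Finset.sum_mul]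
  -- step 3 : trace(S*S) ≤ trace S
  have h3 : ((S * S).trace).re ≤ (S.trace).re := by
    have := (Complex.le_def.mp (trace_mul_nonneg hSpsd hC.2)).1
    have he : (S * (1 - S)).trace = S.trace - (S * S).trace := by
      rw [mul_sub, mul_one, Matrix.trace_sub]
    rw [he] at this
    simp only [Complex.sub_re, Complex.zero_re] at this
    linarith
  -- step 4 : trace S ≤ n
  have h4 : (S.trace).re ≤ (n : ℝ) := by
    have := (Complex.le_def.mp (trace_nonneg_of_psd hC.2)).1
    have he : ((1 : Matrix (Fin n) (Fin n) ℂ) - S).trace = (n : ℂ) - S.trace := by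
      rw [Matrix.trace_sub, Matrix.trace_one]; simp
    rw [he] at this
    simp only [Complex.sub_re, Complex.natCast_re, Complex.zero_re] at this
    linarith
  have chain : ∑ a, ((C a * C a).trace).re ≤ (n : ℝ) :=
    le_trans (Finset.sum_le_sum fun a _ => h1 a) (le_trans (le_of_eq h2) (le_trans h3 h4))
  rcases Nat.eq_zero_or_pos n with hn | hn
  · subst hn; simp [tau_re]
  · have hn' : (0:ℝ) < n := by exact_mod_cast hn
    calc ∑ a, (tau (C a * C a)).re = (∑ a, ((C a * C a).trace).re) / n := by
          simp only [tau_re, Finset.sum_div]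
      _ ≤ (n : ℝ) / n := by exact div_le_div_of_nonneg_right chain hn'.le
      _ = 1 := div_self (ne_of_gt hn')

end TCAux

open TCAux in
/-- Transferring consistency along closeness: if `A`, `B` are measurements, `C` a submeasurement,
`A` is `δ`-consistent with `C` and `A` is `ε`-close to `B`, then `B` is `(δ+ε)`-consistent
with `C`. -/
theorem transfer_consistency {n : ℕ} {X α : Type*}
    [Fintype X] [Fintype α] [DecidableEq α]
    (μ : X → ℝ) (hμ0 : ∀ x, 0 ≤ μ x) (hμ1 : ∑ x, μ x = 1)
    (A B C : X → α → Matrix (Fin n) (Fin n) ℂ)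
    (hA : ∀ x, IsMeasurement (A x)) (hB : ∀ x, IsMeasurement (B x))
    (hC : ∀ x, IsSubmeasurement (C x))
    (δ ε : ℝ) (hε : 0 ≤ ε)
    (h1 : ∑ x, μ x * ∑ a, ∑ b, (if a = b then 0 else (tau (A x a * C x b)).re) ≤ δ)
    (h2 : ∑ x, μ x * ∑ a, tauNormSq (A x a - B x a) ≤ ε ^ 2) :
    ∑ x, μ x * ∑ a, ∑ b, (if a = b then 0 else (tau (B x a * C x b)).re) ≤ δ + ε := by
  classical
  -- Step 1: the complex-linear identity
  have key : ∀ (x : X) (M : α → Matrix (Fin n) (Fin n) ℂ), (∑ a, M a) = 1 →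
      ∑ a, ∑ b, (if a = b then 0 else tau (M a * C x b)) =
        tau (∑ b, C x b) - ∑ a, tau (M a * C x a) := by
    intro x M hM
    have inner : ∀ a : α, ∑ b, (if a = b then 0 else tau (M a * C x b)) =
        (∑ b, tau (M a * C x b)) - tau (M a * C x a) := by
      intro a
      calc ∑ b, (if a = b then 0 else tau (M a * C x b))
          = ∑ b, (tau (M a * C x b) - if a = b then tau (M a * C x b) else 0) := by
            refine Finset.sum_congr rfl fun b _ => ?_
            split <;> simp
        _ = _ := by rw [Finset.sum_sub_distrib, Finset.sum_ite_eq]; simp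
    rw [Finset.sum_congr rfl (fun a _ => inner a), Finset.sum_sub_distrib]
    congr 1
    calc ∑ a, ∑ b, tau (M a * C x b) = ∑ a, tau (M a * ∑ b, C x b) := by
          refine Finset.sum_congr rfl fun a _ => ?_
          rw [Finset.mul_sum, tau_sum]
      _ = tau ((∑ a, M a) * ∑ b, C x b) := by rw [Finset.sum_mul, tau_sum]
      _ = tau (∑ b, C x b) := by rw [hM, one_mul]
  have hxid : ∀ x, (∑ a, ∑ b, (if a = b then 0 else (tau (B x a * C x b)).re)) =
      (∑ a, ∑ b, (if a = b then 0 else (tau (A x a * C x b)).re)) +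
      ∑ a, (tau ((A x a - B x a) * C x a)).re := by
    intro x
    have hc : (∑ a, ∑ b, (if a = b then 0 else tau (B x a * C x b))) =
        (∑ a, ∑ b, (if a = b then 0 else tau (A x a * C x b))) +
        ∑ a, tau ((A x a - B x a) * C x a) := by
      rw [key x (B x) (hB x).2, key x (A x) (hA x).2]
      have hsub : ∀ a : α, tau ((A x a - B x a) * C x a)
          = tau (A x a * C x a) - tau (B x a * C x a) := by
        intro a; rw [sub_mul, tau_sub]
      rw [Finset.sum_congr rfl (fun a _ => hsub a), Finset.sum_sub_distrib]
      ring
    have := congrArg Complex.re hc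
    simpa [Complex.re_sum, Complex.add_re, Complex.sub_re, apply_ite Complex.re] using this
  -- Hermitian facts
  have herm : ∀ x a, (A x a - B x a)ᴴ = A x a - B x a := fun x a => by
    rw [Matrix.conjTranspose_sub, ((hA x).1 a).1.eq, ((hB x).1 a).1.eq]
  have hermC : ∀ x a, (C x a)ᴴ = C x a := fun x a => ((hC x).1 a).1.eq
  -- Per-term Cauchy-Schwarz
  have perterm : ∀ x a, (tau ((A x a - B x a) * C x a)).re ≤
      Real.sqrt (tauNormSq (A x a - B x a)) * Real.sqrt ((tau (C x a * C x a)).re) := by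
    intro x a
    have h := tau_cs (A x a - B x a) (C x a)
    rw [herm x a, hermC x a] at h
    have ht : tauNormSq (A x a - B x a) = (tau ((A x a - B x a) * (A x a - B x a))).re := by
      rw [tauNormSq, herm x a]
    rw [ht]
    exact h
  have hccnn : ∀ x a, 0 ≤ (tau (C x a * C x a)).re := fun x a => by
    have := tauNormSq_nonneg (C x a); rwa [tauNormSq, hermC x a] at this
  -- the error bound
  have herr : ∑ x, μ x * ∑ a, (tau ((A x a - B x a) * C x a)).re ≤ ε := by
    set f : X × α → ℝ := fun p => Real.sqrt (μ p.1) * Real.sqrt (tauNormSq (A p.1 p.2 - B p.1 p.2))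
      with hf
    set g : X × α → ℝ := fun p => Real.sqrt (μ p.1) * Real.sqrt ((tau (C p.1 p.2 * C p.1 p.2)).re)
      with hg
    have step1 : ∑ x, μ x * ∑ a, (tau ((A x a - B x a) * C x a)).re ≤
        ∑ p : X × α, f p * g p := by
      rw [Fintype.sum_prod_type]
      refine Finset.sum_le_sum fun x _ => ?_
      calc μ x * ∑ a, (tau ((A x a - B x a) * C x a)).re
          ≤ μ x * ∑ a, Real.sqrt (tauNormSq (A x a - B x a)) *
              Real.sqrt ((tau (C x a * C x a)).re) :=
            mul_le_mul_of_nonneg_left (Finset.sum_le_sum fun a _ => perterm x a) (hμ0 x)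
        _ = ∑ a, f (x, a) * g (x, a) := by
            rw [Finset.mul_sum]
            refine Finset.sum_congr rfl fun a _ => ?_
            have hm : Real.sqrt (μ x) * Real.sqrt (μ x) = μ x := Real.mul_self_sqrt (hμ0 x)
            have hfg : f (x, a) * g (x, a) = (Real.sqrt (μ x) * Real.sqrt (μ x)) *
                (Real.sqrt (tauNormSq (A x a - B x a)) * Real.sqrt ((tau (C x a * C x a)).re)) := by
              simp only [hf, hg]; ring
            rw [hfg, hm]
    have hfsq : ∑ p : X × α, f p ^ 2 = ∑ x, μ x * ∑ a, tauNormSq (A x a - B x a) := by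
      rw [Fintype.sum_prod_type]
      refine Finset.sum_congr rfl fun x _ => ?_
      rw [Finset.mul_sum]
      refine Finset.sum_congr rfl fun a _ => ?_
      simp only [hf]
      rw [mul_pow, Real.sq_sqrt (hμ0 x), Real.sq_sqrt (tauNormSq_nonneg _)]
    have hgsq : ∑ p : X × α, g p ^ 2 ≤ 1 := by
      rw [Fintype.sum_prod_type]
      calc ∑ x, ∑ a, g (x, a) ^ 2 = ∑ x, μ x * ∑ a, (tau (C x a * C x a)).re := by
            refine Finset.sum_congr rfl fun x _ => ?_
            rw [Finset.mul_sum]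
            refine Finset.sum_congr rfl fun a _ => ?_
            simp only [hg]
            rw [mul_pow, Real.sq_sqrt (hμ0 x), Real.sq_sqrt (hccnn x a)]
        _ ≤ ∑ x, μ x * 1 :=
            Finset.sum_le_sum fun x _ =>
              mul_le_mul_of_nonneg_left (sum_tau_sq_le_one (hC x)) (hμ0 x)
        _ = 1 := by simp [hμ1]
    have step2 : ∑ p : X × α, f p * g p ≤ ε := by
      calc ∑ p : X × α, f p * g p
          ≤ Real.sqrt (∑ p : X × α, f p ^ 2) * Real.sqrt (∑ p : X × α, g p ^ 2) :=
            sum_cs f g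
              (fun p => mul_nonneg (Real.sqrt_nonneg _) (Real.sqrt_nonneg _))
              (fun p => mul_nonneg (Real.sqrt_nonneg _) (Real.sqrt_nonneg _))
        _ ≤ Real.sqrt (ε ^ 2) * Real.sqrt 1 :=
            mul_le_mul (Real.sqrt_le_sqrt (hfsq ▸ h2)) (Real.sqrt_le_sqrt hgsq)
              (Real.sqrt_nonneg _) (Real.sqrt_nonneg _)
        _ = ε := by rw [Real.sqrt_sq hε, Real.sqrt_one, mul_one]
    exact le_trans step1 step2
  calc ∑ x, μ x * ∑ a, ∑ b, (if a = b then 0 else (tau (B x a * C x b)).re)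
      = (∑ x, μ x * ∑ a, ∑ b, (if a = b then 0 else (tau (A x a * C x b)).re)) +
        ∑ x, μ x * ∑ a, (tau ((A x a - B x a) * C x a)).re := by
        rw [← Finset.sum_add_distrib]
        refine Finset.sum_congr rfl fun x _ => ?_
        rw [hxid x, mul_add]
    _ ≤ δ + ε := add_le_add h1 herr
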